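/- Let F be a real antisymmetric 4×4 matrix, and on the open set of invertible real 4×4 matrices G with det G < 0 define L(G) := −¼ Σ_{μ,ν,α,β} (G⁻¹)^{μα} (G⁻¹)^{νβ} F_{αβ} F_{μν} · √(−det G). Then L is differentiable at every symmetric invertible G with det G < 0, its gradient there is symmetric, and for all indices μ, ν: 2 Σ_ρ (∂L/∂G_{μρ})(G) · G_{ρν} = −( ¼ δ^μ{}_ν Σ_{α,β} F_{αβ} F^{αβ} + Σ_α F^{αμ} F_{να} ) · √(−det G), where indices are raised with G⁻¹: F^{αβ} := Σ_{γ,δ} (G⁻¹)^{αγ} (G⁻¹)^{βδ} F_{γδ}. -/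

import Mathlib

open Matrix BigOperators
open Topology Filter

/-- Norm on matrices (sup norm coming from the Pi structure); used to do calculus
on matrix-valued variables. -/
noncomputable instance matrixNormedAddCommGroup {α β : Type*} [Fintype α] [Fintype β] :
    NormedAddCommGroup (Matrix α β ℝ) :=
  inferInstanceAs (NormedAddCommGroup (α → β → ℝ))

noncomputable instance matrixNormedSpace {α β : Type*} [Fintype α] [Fintype β] :
    NormedSpace ℝ (Matrix α β ℝ) :=
  inferInstanceAs (NormedSpace ℝ (α → β → ℝ))

/-- Partial derivative `∂_μ f (x)` of a scalar function on `ℝ^N`. -/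
noncomputable def pd {N : ℕ} (f : (Fin N → ℝ) → ℝ) (μ : Fin N) (x : Fin N → ℝ) : ℝ :=
  fderiv ℝ f x (Pi.single μ 1)

/-- Jacobian matrix `(Df(x))^a{}_μ = ∂_μ f^a (x)` of a map `ℝ^N → ℝ^M`. -/
noncomputable def jac {N M : ℕ} (f : (Fin N → ℝ) → (Fin M → ℝ)) (x : Fin N → ℝ) :
    Matrix (Fin M) (Fin N) ℝ :=
  Matrix.of fun a μ => fderiv ℝ f x (Pi.single μ 1) a

set_option maxHeartbeats 1000000

abbrev M4 := Matrix (Fin 4) (Fin 4) ℝ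

noncomputable instance : FiniteDimensional ℝ M4 :=
  inferInstanceAs (FiniteDimensional ℝ (Fin 4 → Fin 4 → ℝ))

lemma entry_le (A : M4) (i j : Fin 4) : |A i j| ≤ ‖A‖ := by
  have h1 : ‖A i j‖ ≤ ‖A i‖ := norm_le_pi_norm (A i) j
  have h2 : ‖A i‖ ≤ ‖A‖ := norm_le_pi_norm (A : Fin 4 → Fin 4 → ℝ) i
  simpa using h1.trans h2

lemma mul_norm_le (A B : M4) : ‖A * B‖ ≤ 4 * ‖A‖ * ‖B‖ := by
  have hnn : (0:ℝ) ≤ 4 * ‖A‖ * ‖B‖ := by positivity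
  rw [show (A*B : M4) = (fun i => (A*B) i : Fin 4 → Fin 4 → ℝ) from rfl]
  refine (pi_norm_le_iff_of_nonneg hnn).2 fun i => ?_
  refine (pi_norm_le_iff_of_nonneg hnn).2 fun j => ?_
  have : |(A*B) i j| ≤ ∑ k : Fin 4, |A i k| * |B k j| := by
    rw [Matrix.mul_apply]
    exact (Finset.abs_sum_le_sum_abs _ _).trans (le_of_eq (by simp [abs_mul]))
  refine le_trans (by simpa using this) ?_
  have : ∀ k : Fin 4, |A i k| * |B k j| ≤ ‖A‖ * ‖B‖ := fun k =>
    mul_le_mul (entry_le A i k) (entry_le B k j) (abs_nonneg _) (norm_nonneg _)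
  calc ∑ k : Fin 4, |A i k| * |B k j| ≤ ∑ _k : Fin 4, ‖A‖ * ‖B‖ :=
        Finset.sum_le_sum fun k _ => this k
    _ = 4 * ‖A‖ * ‖B‖ := by simp [Finset.sum_const]; ring

noncomputable def coordL (i j : Fin 4) : M4 →L[ℝ] ℝ :=
  LinearMap.toContinuousLinearMap
    { toFun := fun X : M4 => X i j
      map_add' := fun X Y => rfl
      map_smul' := fun c X => rfl }

@[simp] lemma coordL_apply (i j : Fin 4) (X : M4) : coordL i j X = X i j := rfl

noncomputable def sandL (A B : M4) : M4 →L[ℝ] M4 :=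
  LinearMap.toContinuousLinearMap
    { toFun := fun X : M4 => A * X * B
      map_add' := fun X Y => by noncomm_ring
      map_smul' := fun c X => by
        simp [Matrix.mul_smul, Matrix.smul_mul] }

@[simp] lemma sandL_apply (A B X : M4) : sandL A B X = A * X * B := rfl

noncomputable def detCM : ContinuousMultilinearMap ℝ (fun _ : Fin 4 => (Fin 4 → ℝ)) ℝ :=
  MultilinearMap.mkContinuous
    (Matrix.detRowAlternating (R := ℝ) (n := Fin 4)).toMultilinearMap 24 (by
      intro m
      have : (Matrix.detRowAlternating (R := ℝ) (n := Fin 4)).toMultilinearMap m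
          = Matrix.det (Matrix.of m) := rfl
      rw [this, Matrix.det_apply]
      refine le_trans (norm_sum_le _ _) ?_
      have hterm : ∀ σ : Equiv.Perm (Fin 4),
          ‖Equiv.Perm.sign σ • ∏ i, Matrix.of m (σ i) i‖ ≤ ∏ i : Fin 4, ‖m i‖ := by
        intro σ
        rw [Units.smul_def, norm_zsmul ℝ]
        have h1 : ‖((Equiv.Perm.sign σ : ℤ) : ℝ)‖ = 1 := by
          rcases Int.units_eq_one_or (Equiv.Perm.sign σ) with h | h <;> simp [h]
        rw [h1, one_mul]
        have h2 : ‖∏ i : Fin 4, Matrix.of m (σ i) i‖ ≤ ∏ i : Fin 4, ‖m (σ i)‖ := by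
          rw [Real.norm_eq_abs, Finset.abs_prod]
          exact Finset.prod_le_prod (fun i _ => abs_nonneg _)
            (fun i _ => by simpa using norm_le_pi_norm (m (σ i)) i)
        refine h2.trans (le_of_eq ?_)
        exact Equiv.prod_comp σ (fun i => ‖m i‖)
      refine le_trans (Finset.sum_le_sum fun σ _ => hterm σ) ?_
      rw [Finset.sum_const]
      have : (Finset.univ : Finset (Equiv.Perm (Fin 4))).card = 24 := by
        rw [Finset.card_univ, Fintype.card_perm]; rfl
      rw [this]
      simp [nsmul_eq_mul])

lemma detCM_apply (X : M4) : detCM (X : Fin 4 → Fin 4 → ℝ) = X.det := rfl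

lemma hasFDerivAt_det4 (G : M4) :
    HasFDerivAt Matrix.det (detCM.linearDeriv (G : Fin 4 → Fin 4 → ℝ) : M4 →L[ℝ] ℝ) G := by
  have h := detCM.hasFDerivAt (x := (G : Fin 4 → Fin 4 → ℝ))
  exact h

lemma detDeriv_eval (G H : M4) :
    (detCM.linearDeriv (G : Fin 4 → Fin 4 → ℝ) : M4 →L[ℝ] ℝ) H
      = ∑ i, ∑ j, G.adjugate j i * H i j := by
  show detCM.linearDeriv (G : Fin 4 → Fin 4 → ℝ) (H : Fin 4 → Fin 4 → ℝ)
      = ∑ i, ∑ j, G.adjugate j i * H i j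
  refine (ContinuousMultilinearMap.linearDeriv_apply _ _ _).trans ?_
  have hcoe : ⇑detCM = fun m : Fin 4 → Fin 4 → ℝ => (Matrix.of m).det :=
    MultilinearMap.coe_mkContinuous _ _ _
  have hrow : ∀ i : Fin 4, detCM (Function.update (G : Fin 4 → Fin 4 → ℝ) i (H i))
      = (G.updateRow i (H i)).det := by
    intro i
    rw [hcoe]; rfl
  simp only [hrow]

  refine Finset.sum_congr rfl fun i _ => ?_
  have h1 : (G.updateRow i (H i)).det = Matrix.cramer Gᵀ (H i) i := by
    rw [Matrix.cramer_apply, ← Matrix.det_transpose (G.updateRow i (H i)), Matrix.updateCol_transpose]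
  rw [h1, Matrix.cramer_eq_adjugate_mulVec, Matrix.mulVec]
  simp only [dotProduct, ← Matrix.adjugate_transpose, Matrix.transpose_apply]

lemma hasFDerivAt_inv4 (G : M4) (hdet : G.det ≠ 0) :
    HasFDerivAt (fun K : M4 => K⁻¹) (-(sandL G⁻¹ G⁻¹)) G := by
  have hcont : ContinuousAt (fun K : M4 => K⁻¹) G := by
    refine continuousAt_matrix_inv G ?_
    rw [Ring.inverse_eq_inv']
    exact continuousAt_inv₀ hdet
  have hdcont : ContinuousAt (fun K : M4 => K.det) G :=
    (continuous_id.matrix_det).continuousAt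
  rw [hasFDerivAt_iff_isLittleO_nhds_zero, Asymptotics.isLittleO_iff]
  intro c hc
  set Y := G⁻¹ with hY
  set δ := c / (16 * (‖Y‖ + 1)) with hδ
  have hδpos : 0 < δ := by positivity
  have ht : Filter.Tendsto (fun h : M4 => (G + h).det) (𝓝 0) (𝓝 G.det) := by
    have : Filter.Tendsto (fun h : M4 => G + h) (𝓝 0) (𝓝 G) := by
      simpa using (continuous_const.fun_add continuous_id).tendsto (0 : M4)
    exact Filter.Tendsto.comp hdcont this
  have h1 : ∀ᶠ h : M4 in 𝓝 0, (G + h).det ≠ 0 := ht.eventually_ne hdet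
  have ht2 : Filter.Tendsto (fun h : M4 => (G + h)⁻¹) (𝓝 0) (𝓝 Y) := by
    have hadd : Filter.Tendsto (fun h : M4 => G + h) (𝓝 0) (𝓝 G) := by
      simpa using (continuous_const.fun_add continuous_id).tendsto (0 : M4)
    exact Filter.Tendsto.comp hcont hadd
  have h2 : ∀ᶠ h : M4 in 𝓝 0, dist ((G + h)⁻¹) Y ≤ δ :=
    ht2 (Metric.closedBall_mem_nhds Y hδpos)
  filter_upwards [h1, h2] with h hdet' hdist
  set K := G + h with hK
  have hKunit : IsUnit K.det := isUnit_iff_ne_zero.mpr hdet'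
  have hGunit : IsUnit G.det := isUnit_iff_ne_zero.mpr hdet
  have e2 : G * Y = 1 := Matrix.mul_nonsing_inv G hGunit
  have e3 : K⁻¹ * K = 1 := Matrix.nonsing_inv_mul K hKunit
  have hsub : h = K - G := by rw [hK]; abel
  have h4 : K⁻¹ * (h * Y) = Y - K⁻¹ := by
    calc K⁻¹ * (h * Y) = K⁻¹ * ((K - G) * Y) := by rw [← hsub]
      _ = (K⁻¹ * K) * Y - K⁻¹ * (G * Y) := by noncomm_ring
      _ = Y - K⁻¹ := by rw [e3, e2, one_mul, mul_one]
  have key : K⁻¹ - Y - (-(sandL Y Y)) h = (Y - K⁻¹) * (h * Y) := by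
    have : (-(sandL Y Y)) h = -(Y * h * Y) := by simp
    rw [this, Matrix.sub_mul, h4]
    noncomm_ring
  rw [key]
  have b1 : ‖(Y - K⁻¹) * (h * Y)‖ ≤ 4 * ‖Y - K⁻¹‖ * ‖h * Y‖ := mul_norm_le _ _
  have b2 : ‖h * Y‖ ≤ 4 * ‖h‖ * ‖Y‖ := mul_norm_le _ _
  have b3 : ‖Y - K⁻¹‖ ≤ δ := by
    rw [norm_sub_rev, ← dist_eq_norm]
    exact hdist
  have hDpos : (0:ℝ) < 16 * (‖Y‖ + 1) := by positivity
  have hfinal : 4 * δ * (4 * ‖h‖ * ‖Y‖) ≤ c * ‖h‖ := by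
    rw [hδ, show 4 * (c / (16 * (‖Y‖ + 1))) * (4 * ‖h‖ * ‖Y‖)
        = c * (16 * ‖Y‖ * ‖h‖) / (16 * (‖Y‖ + 1)) from by ring, div_le_iff₀ hDpos]
    nlinarith [norm_nonneg (h : M4), norm_nonneg Y, hc.le,
      mul_nonneg hc.le (norm_nonneg (h : M4))]
  calc ‖(Y - K⁻¹) * (h * Y)‖ ≤ 4 * ‖Y - K⁻¹‖ * ‖h * Y‖ := b1
    _ ≤ 4 * δ * (4 * ‖h‖ * ‖Y‖) := by
        apply mul_le_mul
        · exact mul_le_mul_of_nonneg_left b3 (by norm_num)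
        · exact b2
        · exact norm_nonneg _
        · positivity
    _ ≤ c * ‖h‖ := hfinal

lemma frob_trace (A B : M4) : ∑ i, ∑ j, A i j * B i j = Matrix.trace (A * Bᵀ) := by
  simp [Matrix.trace, Matrix.diag, Matrix.mul_apply]

lemma hasFDerivAt_q (F Y : M4) :
    HasFDerivAt (fun X : M4 => ∑ i, ∑ j, X i j * (F * X * Fᵀ) i j)
      (∑ i : Fin 4, ∑ j : Fin 4,
        (Y i j • ((coordL i j).comp (sandL F Fᵀ)) + (F * Y * Fᵀ) i j • coordL i j)) Y := by
  refine HasFDerivAt.fun_sum fun i _ => HasFDerivAt.fun_sum fun j _ => ?_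
  exact (coordL i j).hasFDerivAt.fun_mul ((coordL i j).comp (sandL F Fᵀ)).hasFDerivAt

lemma sum4_eq (F X : M4) :
    (∑ μ, ∑ ν, ∑ α, ∑ β, X μ α * X ν β * F α β * F μ ν)
      = ∑ i, ∑ j, X i j * (F * X * Fᵀ) i j := by
  refine Finset.sum_congr rfl fun μ _ => ?_
  rw [Finset.sum_comm]
  refine Finset.sum_congr rfl fun α _ => ?_
  rw [Matrix.mul_apply, Finset.mul_sum]
  rw [Finset.sum_comm]
  refine Finset.sum_congr rfl fun ν _ => ?_
  rw [Matrix.mul_apply, Finset.sum_mul, Finset.mul_sum]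
  refine Finset.sum_congr rfl fun β _ => ?_
  rw [Matrix.transpose_apply]
  ring

lemma trace_mul_stdBasis (A : M4) (i j : Fin 4) :
    Matrix.trace (A * (Matrix.single i j 1)ᵀ) = A i j := by
  rw [← frob_trace]
  simp [Matrix.single, Matrix.of_apply, ite_and, mul_ite]

lemma frob_trace' (A B : M4) : ∑ i, ∑ j, A i j * B i j = Matrix.trace (Aᵀ * B) := by
  rw [Finset.sum_comm]
  simp [Matrix.trace, Matrix.diag, Matrix.mul_apply]

lemma trace_mul_stdBasis2 (A : M4) (i j : Fin 4) :
    Matrix.trace (A * Matrix.single i j 1) = A j i := by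
  simp [Matrix.trace, Matrix.diag, Matrix.mul_apply, Matrix.single, Matrix.of_apply,
    ite_and, mul_ite]

/-- SEM tensor density of the electromagnetic field: for the
electromagnetic Lagrangian `L(G) = −¼ G^{μα} G^{νβ} F_{αβ} F_{μν} √(−det G)` with a fixed
antisymmetric `F`, at every symmetric `G` with `det G < 0`, `L` is differentiable with
symmetric gradient and
`2 (∂L/∂G_{μρ}) G_{ρν} = −(¼ δ^μ{}_ν F_{αβ}F^{αβ} + F^{αμ}F_{να}) √(−det G)`. -/
theorem em_sem_tensor_density
    (F : Matrix (Fin 4) (Fin 4) ℝ) (hF : Fᵀ = -F)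
    (L : Matrix (Fin 4) (Fin 4) ℝ → ℝ)
    (hL : ∀ G : Matrix (Fin 4) (Fin 4) ℝ, L G
      = -(1/4) * (∑ μ, ∑ ν, ∑ α, ∑ β, G⁻¹ μ α * G⁻¹ ν β * F α β * F μ ν) *
          Real.sqrt (-G.det))
    (G : Matrix (Fin 4) (Fin 4) ℝ) (hGsymm : G.IsSymm) (hGdet : G.det < 0)
    -- the raised field strength F^{αβ} := (G⁻¹)^{αγ} (G⁻¹)^{βδ} F_{γδ}
    (Fup : Fin 4 → Fin 4 → ℝ)
    (hFup : ∀ α β, Fup α β = ∑ γ, ∑ δ, G⁻¹ α γ * G⁻¹ β δ * F γ δ) :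
    DifferentiableAt ℝ L G ∧
      (∀ μ ν, fderiv ℝ L G (Matrix.single μ ν 1)
        = fderiv ℝ L G (Matrix.single ν μ 1)) ∧
      (∀ μ ν, 2 * ∑ ρ, fderiv ℝ L G (Matrix.single μ ρ 1) * G ρ ν
        = -((1/4) * (if μ = ν then (1:ℝ) else 0) * (∑ α, ∑ β, F α β * Fup α β)
            + ∑ α, Fup α μ * F ν α) * Real.sqrt (-G.det)) := by
  have hdet : G.det ≠ 0 := ne_of_lt hGdet
  have hGunit : IsUnit G.det := isUnit_iff_ne_zero.mpr hdet
  set Y : M4 := G⁻¹ with hYdef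
  have hYsymm : Yᵀ = Y := by
    rw [hYdef, Matrix.transpose_nonsing_inv, hGsymm.eq]
  have hYe : ∀ a b, Y a b = Y b a := fun a b => by
    conv_lhs => rw [← hYsymm, Matrix.transpose_apply]
  have hndet : (0:ℝ) < -G.det := by linarith
  set s : ℝ := Real.sqrt (-G.det) with hsdef
  have hspos : 0 < s := Real.sqrt_pos.mpr hndet
  have hs2 : s ^ 2 = -G.det := Real.sq_sqrt (le_of_lt hndet)
  set q : M4 → ℝ := fun X => ∑ i, ∑ j, X i j * (F * X * Fᵀ) i j with hqdef
  set T : ℝ := q Y with hTdef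
  set Dq : M4 →L[ℝ] ℝ := ∑ i : Fin 4, ∑ j : Fin 4,
        (Y i j • ((coordL i j).comp (sandL F Fᵀ)) + (F * Y * Fᵀ) i j • coordL i j) with hDqdef
  set Ddet : M4 →L[ℝ] ℝ := (detCM.linearDeriv (G : Fin 4 → Fin 4 → ℝ) : M4 →L[ℝ] ℝ)
    with hDdetdef
  set Dsq : M4 →L[ℝ] ℝ := (1 / (2*s)) • (-Ddet) with hDsqdef
  set D : M4 →L[ℝ] ℝ := (-(1/4):ℝ) • (T • Dsq + s • (Dq.comp (-(sandL Y Y)))) with hDdef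
  have hsqrt : HasFDerivAt (fun K : M4 => Real.sqrt (-K.det)) Dsq G := by
    have hneg : HasFDerivAt (fun K : M4 => -K.det) (-Ddet) G := (hasFDerivAt_det4 G).neg
    have h1 : HasDerivAt Real.sqrt (1/(2*Real.sqrt (-G.det))) (-G.det) :=
      Real.hasDerivAt_sqrt (ne_of_gt hndet)
    have h2 := h1.comp_hasFDerivAt G hneg
    rw [hDsqdef, hsdef]
    exact h2
  have hinv : HasFDerivAt (fun K : M4 => K⁻¹) (-(sandL Y Y)) G := hasFDerivAt_inv4 G hdet
  have hqder := hasFDerivAt_q F Y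
  have hqi : HasFDerivAt (fun K : M4 => q K⁻¹) (Dq.comp (-(sandL Y Y))) G := HasFDerivAt.comp (g := q) G hqder hinv
  have hLfun : L = fun K : M4 => -(1/4) * (q K⁻¹ * Real.sqrt (-K.det)) := by
    funext K; rw [hL K, sum4_eq]; ring
  have hDL : HasFDerivAt L D G := by
    rw [hLfun, hDdef]
    exact (hqi.mul hsqrt).const_mul _
  have hfd : fderiv ℝ L G = D := hDL.fderiv
  have hs0 : s ≠ 0 := ne_of_gt hspos
  have hadj : ∀ a b, G.adjugate a b = G.det * Y a b := by
    intro a b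
    have h1 : Y a b = (G.det)⁻¹ * G.adjugate a b := by
      rw [hYdef, Matrix.inv_def, Ring.inverse_eq_inv']
      simp [Matrix.smul_apply]
    rw [h1]
    field_simp
  have hDdetE : ∀ i j : Fin 4, Ddet (Matrix.single i j 1) = G.det * Y j i := by
    intro i j
    rw [hDdetdef]
    refine (detDeriv_eval G (Matrix.single i j 1)).trans ?_
    rw [← hadj]
    simp [Matrix.single, Matrix.of_apply, ite_and, mul_ite]
  have hDsqE : ∀ i j : Fin 4, Dsq (Matrix.single i j 1) = (s/2) * Y i j := by
    intro i j
    rw [hDsqdef]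
    simp only [ContinuousLinearMap.smul_apply, ContinuousLinearMap.neg_apply, hDdetE,
      smul_eq_mul]
    rw [hYe j i]
    have hdet' : G.det = -s^2 := by linarith
    rw [hdet']
    field_simp
  have hDqK : ∀ K : M4, Dq K = -2 * Matrix.trace (F*Y*F*K) := by
    intro K
    have h1 : Dq K = (∑ i, ∑ j, Y i j * (F*K*Fᵀ) i j)
        + (∑ i, ∑ j, (F*Y*Fᵀ) i j * K i j) := by
      rw [hDqdef]
      simp only [ContinuousLinearMap.sum_apply, ContinuousLinearMap.add_apply,
        ContinuousLinearMap.smul_apply, ContinuousLinearMap.comp_apply, coordL_apply,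
        sandL_apply, smul_eq_mul, Finset.sum_add_distrib]
    rw [h1, frob_trace' Y (F*K*Fᵀ), frob_trace' (F*Y*Fᵀ) K, hYsymm]
    have e1 : Matrix.trace (Y * (F*K*Fᵀ)) = -Matrix.trace (F*Y*F*K) := by
      rw [hF]
      rw [show Y * (F*K*(-F)) = -((Y*F*K)*F) from by
        simp [Matrix.mul_neg, Matrix.mul_assoc]]
      rw [Matrix.trace_neg, Matrix.trace_mul_comm]
      rw [show F*(Y*F*K) = F*Y*F*K from by simp [Matrix.mul_assoc]]
    have e2 : Matrix.trace ((F*Y*Fᵀ)ᵀ * K) = -Matrix.trace (F*Y*F*K) := by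
      rw [show (F*Y*Fᵀ)ᵀ = -(F*Y*F) from by
        rw [hF]
        simp only [Matrix.transpose_mul, Matrix.transpose_neg, Matrix.transpose_transpose,
          hYsymm, hF]
        simp [Matrix.mul_neg, Matrix.neg_mul, Matrix.mul_assoc]]
      rw [Matrix.neg_mul, Matrix.trace_neg]
    rw [e1, e2]
    ring
  have hA5symm : (Y*F*Y*F*Y)ᵀ = Y*F*Y*F*Y := by
    simp only [Matrix.transpose_mul, hYsymm, hF]
    simp [Matrix.mul_neg, Matrix.neg_mul, Matrix.mul_assoc]
  have hA5e : ∀ a b, (Y*F*Y*F*Y) a b = (Y*F*Y*F*Y) b a := fun a b => by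
    conv_lhs => rw [← hA5symm, Matrix.transpose_apply]
  have hA5E : ∀ i j : Fin 4, Dq ((-(sandL Y Y)) (Matrix.single i j 1))
      = 2 * (Y*F*Y*F*Y) i j := by
    intro i j
    have h0 : (-(sandL Y Y)) (Matrix.single i j 1)
        = -(Y * Matrix.single i j 1 * Y) := by simp
    rw [h0, hDqK, Matrix.mul_neg, Matrix.trace_neg]
    rw [show F*Y*F * (Y * Matrix.single i j 1 * Y)
        = (F*Y*F*Y* Matrix.single i j 1) * Y from by simp [Matrix.mul_assoc]]
    rw [Matrix.trace_mul_comm]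
    rw [show Y * (F*Y*F*Y* Matrix.single i j 1)
        = (Y*F*Y*F*Y) * Matrix.single i j 1 from by simp [Matrix.mul_assoc]]
    rw [trace_mul_stdBasis2, hA5e j i]
    ring
  have hDE : ∀ i j : Fin 4, D (Matrix.single i j 1)
      = -(1/4) * (T * ((s/2) * Y i j) + s * (2 * (Y*F*Y*F*Y) i j)) := by
    intro i j
    rw [hDdef]
    simp only [ContinuousLinearMap.smul_apply, ContinuousLinearMap.add_apply,
      ContinuousLinearMap.comp_apply, smul_eq_mul]
    rw [hDsqE, hA5E]
  -- Fup as a matrix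
  have hFupW : ∀ α β, Fup α β = (Y*F*Y) α β := by
    intro α β
    rw [hFup α β]
    calc (∑ γ, ∑ δ, Y α γ * Y β δ * F γ δ)
        = ∑ δ, ∑ γ, Y α γ * Y β δ * F γ δ := Finset.sum_comm
      _ = ∑ δ, (∑ γ, Y α γ * F γ δ) * Y δ β := by
          refine Finset.sum_congr rfl fun δ _ => ?_
          rw [Finset.sum_mul]
          refine Finset.sum_congr rfl fun γ _ => ?_
          rw [hYe β δ]; ring
      _ = (Y*F*Y) α β := by
          rw [Matrix.mul_apply]
          refine Finset.sum_congr rfl fun δ _ => ?_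
          rw [Matrix.mul_apply]
  have hT' : (∑ α, ∑ β, F α β * Fup α β) = T := by
    simp only [hFupW]
    rw [frob_trace' F (Y*F*Y)]
    rw [hTdef]
    simp only [hqdef]
    rw [frob_trace' Y (F*Y*Fᵀ), hYsymm, hF]
    rw [show Y * (F*Y*(-F)) = -((Y*F*Y)*F) from by simp [Matrix.mul_neg, Matrix.mul_assoc]]
    rw [show (-F) * (Y*F*Y) = -(F*(Y*F*Y)) from by simp]
    rw [Matrix.trace_neg, Matrix.trace_neg, Matrix.trace_mul_comm]
  have hBT : (Y*F*Y*F)ᵀ = F*(Y*F*Y) := by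
    simp only [Matrix.transpose_mul, hYsymm, hF]
    simp [Matrix.mul_neg, Matrix.neg_mul, Matrix.mul_assoc]
  have hFW : ∀ μ ν : Fin 4, (∑ α, Fup α μ * F ν α) = (Y*F*Y*F) μ ν := by
    intro μ ν
    simp only [hFupW]
    have h1 : (∑ α, (Y*F*Y) α μ * F ν α) = (F*(Y*F*Y)) ν μ := by
      rw [Matrix.mul_apply]
      exact Finset.sum_congr rfl fun α _ => mul_comm _ _
    rw [h1, ← hBT, Matrix.transpose_apply]
  refine ⟨hDL.differentiableAt, ?_, ?_⟩
  · intro μ ν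
    rw [hfd, hDE μ ν, hDE ν μ, hYe ν μ, hA5e ν μ]
  · intro μ ν
    rw [hfd]
    simp only [hDE]
    have hc1 : ∀ ρ : Fin 4,
        (-(1/4) * (T * ((s/2) * Y μ ρ) + s * (2 * (Y*F*Y*F*Y) μ ρ))) * G ρ ν
        = (-(T*s/8)) * (Y μ ρ * G ρ ν) + (-(s/2)) * ((Y*F*Y*F*Y) μ ρ * G ρ ν) :=
      fun ρ => by ring
    rw [Finset.sum_congr rfl fun ρ _ => hc1 ρ, Finset.sum_add_distrib,
      ← Finset.mul_sum, ← Finset.mul_sum]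
    have hYG : (∑ ρ, Y μ ρ * G ρ ν) = (1 : M4) μ ν := by
      rw [← Matrix.mul_apply, hYdef, Matrix.nonsing_inv_mul G hGunit]
    have hAG : (∑ ρ, (Y*F*Y*F*Y) μ ρ * G ρ ν) = (Y*F*Y*F) μ ν := by
      rw [← Matrix.mul_apply]
      have : (Y*F*Y*F*Y) * G = Y*F*Y*F := by
        rw [Matrix.mul_assoc (Y*F*Y*F) Y G, hYdef, Matrix.nonsing_inv_mul G hGunit,
          Matrix.mul_one]
      rw [this]
    rw [hYG, hAG, Matrix.one_apply, hT', hFW]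
    ring
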